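/- Soundness of the Dialectica right conditional rule (cond_R): Let X, Y, U, V, W, Z be types, P : X → Y → Prop with P x y decidable for all x, y, Q : U → V → Prop, R : W → Z → Prop. Suppose the Dialectica triple P ⟨a|α⟩ Q holds for a : X → U, α : X → V → Y, and the Dialectica triple P ⟨b|β⟩ R holds for b : X → W, β : X → Z → Y. Define γ : X → V → Z → Y by γ x v w = if P x (α x v) then β x w else α x v. Then for all x : X, v : V, w : Z, P x (γ x v w) implies Q (a x) v ∧ R (b x) w. -/
import Mathlib

/-- Soundness of the Dialectica right conditional rule (cond_R). -/
theorem dialectica_cond_R {X Y U V W Z : Type*}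
    (P : X → Y → Prop) [∀ x y, Decidable (P x y)]
    (Q : U → V → Prop) (R : W → Z → Prop)
    (a : X → U) (α : X → V → Y) (b : X → W) (β : X → Z → Y)
    (h₁ : ∀ x v, P x (α x v) → Q (a x) v)
    (h₂ : ∀ x w, P x (β x w) → R (b x) w)
    (γ : X → V → Z → Y)
    (hγ : ∀ x v w, γ x v w = if P x (α x v) then β x w else α x v) :
    ∀ (x : X) (v : V) (w : Z), P x (γ x v w) → Q (a x) v ∧ R (b x) w := by
  intro x v w h
  rw [hγ] at h
  by_cases hp : P x (α x v)
  · rw [if_pos hp] at h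
    exact ⟨h₁ x v hp, h₂ x w h⟩
  · rw [if_neg hp] at h
    exact absurd h hp
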